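/- Let λ₁, λ₂ ∈ ℝ and σ > 1, and let φ : ℝ → ℂ be continuously differentiable with φ ∈ L^∞(ℝ) and ∂_x φ ∈ L²(ℝ). Then there exists a constant C > 0, depending only on λ₁, λ₂, σ, ‖φ‖_{L^∞} and ‖∂_x φ‖_{L²}, such that for all t ≥ 2: ‖∂_x w_p(t,·) − ∂_x w̃_p(t,·)‖_{L²(ℝ)} ≤ C t^{1−σ} log t. -/

import Mathlib

open MeasureTheory Complex ENNReal

/-- `w_p(t,x) = exp(−iλ₁|φ(x)|² log t) φ(x)`. -/
noncomputable def wp (lam1 : ℝ) (φ : ℝ → ℂ) (t x : ℝ) : ℂ :=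
  Complex.exp (-(Complex.I) * (↑lam1:ℂ) * (↑(‖φ x‖ ^ 2):ℂ) * (↑(Real.log t):ℂ)) * φ x

/-- `w̃_p(t,x) = exp(−iλ₁|φ(x)|² log t − i(λ₂/(1−σ))|φ(x)|^{2σ} t^{1−σ}) φ(x)`. -/
noncomputable def wtp (lam1 lam2 σ : ℝ) (φ : ℝ → ℂ) (t x : ℝ) : ℂ :=
  Complex.exp (-(Complex.I) * (↑lam1:ℂ) * (↑(‖φ x‖ ^ 2):ℂ) * (↑(Real.log t):ℂ)
      - Complex.I * (↑(lam2/(1-σ)):ℂ) * (↑(‖φ x‖ ^ (2*σ)):ℂ) * (↑(t ^ (1-σ)):ℂ)) * φ x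

lemma aux_exp_I_sub_one_le (θ : ℝ) : ‖Complex.exp ((θ:ℂ) * Complex.I) - 1‖ ≤ |θ| := by
  have he : Complex.exp ((θ:ℂ)*Complex.I) - 1
      = ((Real.cos θ - 1 : ℝ) : ℂ) + ((Real.sin θ : ℝ) : ℂ) * Complex.I := by
    rw [Complex.exp_mul_I]; push_cast; ring
  rw [he, Complex.norm_add_mul_I]
  have h : (Real.cos θ - 1)^2 + (Real.sin θ)^2 ≤ θ^2 := by
    nlinarith [Real.one_sub_sq_div_two_le_cos (x := θ), Real.sin_sq_add_cos_sq θ]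
  calc Real.sqrt ((Real.cos θ - 1)^2 + (Real.sin θ)^2) ≤ Real.sqrt (θ^2) :=
        Real.sqrt_le_sqrt h
    _ = |θ| := Real.sqrt_sq_eq_abs θ

lemma aux_re_ip_le (z w : ℂ) : |z.re * w.re + z.im * w.im| ≤ ‖z‖ * ‖w‖ := by
  have h := Complex.abs_re_le_norm ((starRingEnd ℂ z) * w)
  simp only [Complex.mul_re, Complex.conj_re, Complex.conj_im, norm_mul, Complex.norm_conj] at h
  calc |z.re * w.re + z.im * w.im| = |z.re * w.re - -z.im * w.im| := by ring_nf
    _ ≤ ‖z‖ * ‖w‖ := h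
    _ = ‖z‖ * ‖w‖ := by simp

noncomputable def drv (φ : ℝ → ℂ) (x : ℝ) : ℝ :=
  2*((φ x).re*(deriv φ x).re + (φ x).im*(deriv φ x).im)

lemma aux_hasDerivAt_r (φ : ℝ → ℂ) (hφ : Differentiable ℝ φ) (x : ℝ) :
    HasDerivAt (fun y => ‖φ y‖ ^ 2) (drv φ x) x := by
  have hx := (hφ x).hasDerivAt
  have hre : HasDerivAt (fun y => (φ y).re) (deriv φ x).re x :=
    Complex.reCLM.hasFDerivAt.comp_hasDerivAt x hx
  have him : HasDerivAt (fun y => (φ y).im) (deriv φ x).im x :=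
    Complex.imCLM.hasFDerivAt.comp_hasDerivAt x hx
  have heq : (fun y => ‖φ y‖^2)
      = fun y => (φ y).re*(φ y).re + (φ y).im*(φ y).im := by
    funext y; rw [Complex.sq_norm, Complex.normSq_apply]
  rw [heq]
  exact ((hre.mul hre).add (him.mul him)).congr_deriv (by unfold drv; ring)

lemma aux_drv_le (φ : ℝ → ℂ) (x : ℝ) : |drv φ x| ≤ 2*‖φ x‖*‖deriv φ x‖ := by
  unfold drv
  rw [abs_mul, show |(2:ℝ)| = 2 by norm_num]
  have := aux_re_ip_le (φ x) (deriv φ x)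
  nlinarith [this, abs_nonneg ((φ x).re*(deriv φ x).re + (φ x).im*(deriv φ x).im)]

lemma aux_hasDerivAt_s (σ : ℝ) (hσ : 1 ≤ σ) (φ : ℝ → ℂ) (hφ : Differentiable ℝ φ) (x : ℝ) :
    HasDerivAt (fun y => ‖φ y‖ ^ (2*σ))
      (σ * ((‖φ x‖^2 : ℝ))^(σ-1) * drv φ x) x := by
  have heq : (fun y => ‖φ y‖ ^ (2*σ))
      = fun y => ((‖φ y‖^2 : ℝ))^σ := by
    funext y
    rw [← Real.rpow_natCast (‖φ y‖) 2, ← Real.rpow_mul (norm_nonneg _)]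
    norm_num
  rw [heq]
  exact (Real.hasDerivAt_rpow_const (Or.inr hσ)).comp x (aux_hasDerivAt_r φ hφ x)

lemma aux_hasDerivAt_wp (lam1 : ℝ) (φ : ℝ → ℂ) (hφ : Differentiable ℝ φ) (t x : ℝ) :
    HasDerivAt (wp lam1 φ t)
      (Complex.exp (-(Complex.I) * (↑lam1:ℂ) * (↑(‖φ x‖ ^ 2):ℂ) * (↑(Real.log t):ℂ))
          * (-(Complex.I) * (↑lam1:ℂ) * (↑(drv φ x):ℂ) * (↑(Real.log t):ℂ)) * φ x
        + Complex.exp (-(Complex.I) * (↑lam1:ℂ) * (↑(‖φ x‖ ^ 2):ℂ) * (↑(Real.log t):ℂ))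
          * deriv φ x) x := by
  have hrC : HasDerivAt (fun y => ((‖φ y‖^2 : ℝ) : ℂ)) ((drv φ x : ℝ):ℂ) x :=
    Complex.ofRealCLM.hasFDerivAt.comp_hasDerivAt x (aux_hasDerivAt_r φ hφ x)
  have hc := (hrC.const_mul (-(Complex.I) * (lam1:ℂ))).mul_const ((Real.log t : ℝ):ℂ)
  have hwp : wp lam1 φ t = fun y =>
      Complex.exp (-(Complex.I) * (↑lam1:ℂ) * (↑(‖φ y‖ ^ 2):ℂ) * (↑(Real.log t):ℂ)) * φ y := rfl
  rw [hwp]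
  exact hc.cexp.mul (hφ x).hasDerivAt

lemma aux_hasDerivAt_wtp (lam1 lam2 σ : ℝ) (hσ : 1 ≤ σ) (φ : ℝ → ℂ) (hφ : Differentiable ℝ φ)
    (t x : ℝ) :
    HasDerivAt (wtp lam1 lam2 σ φ t)
      (Complex.exp (-(Complex.I) * (↑lam1:ℂ) * (↑(‖φ x‖ ^ 2):ℂ) * (↑(Real.log t):ℂ)
            - Complex.I * (↑(lam2/(1-σ)):ℂ) * (↑(‖φ x‖ ^ (2*σ)):ℂ) * (↑(t ^ (1-σ)):ℂ))
          * (-(Complex.I) * (↑lam1:ℂ) * (↑(drv φ x):ℂ) * (↑(Real.log t):ℂ)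
            - Complex.I * (↑(lam2/(1-σ)):ℂ) * (↑(σ * ((‖φ x‖^2 : ℝ))^(σ-1) * drv φ x):ℂ) * (↑(t ^ (1-σ)):ℂ)) * φ x
        + Complex.exp (-(Complex.I) * (↑lam1:ℂ) * (↑(‖φ x‖ ^ 2):ℂ) * (↑(Real.log t):ℂ)
            - Complex.I * (↑(lam2/(1-σ)):ℂ) * (↑(‖φ x‖ ^ (2*σ)):ℂ) * (↑(t ^ (1-σ)):ℂ))
          * deriv φ x) x := by
  have hrC : HasDerivAt (fun y => ((‖φ y‖^2 : ℝ) : ℂ)) ((drv φ x : ℝ):ℂ) x :=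
    Complex.ofRealCLM.hasFDerivAt.comp_hasDerivAt x (aux_hasDerivAt_r φ hφ x)
  have hc := (hrC.const_mul (-(Complex.I) * (lam1:ℂ))).mul_const ((Real.log t : ℝ):ℂ)
  have hsC : HasDerivAt (fun y => ((‖φ y‖ ^ (2*σ) : ℝ) : ℂ))
      ((σ * ((‖φ x‖^2 : ℝ))^(σ-1) * drv φ x : ℝ):ℂ) x :=
    Complex.ofRealCLM.hasFDerivAt.comp_hasDerivAt x (aux_hasDerivAt_s σ hσ φ hφ x)
  have hb := (hsC.const_mul (Complex.I * ((lam2/(1-σ) : ℝ):ℂ))).mul_const ((t ^ (1-σ) : ℝ):ℂ)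
  have hwtp : wtp lam1 lam2 σ φ t = fun y =>
      Complex.exp (-(Complex.I) * (↑lam1:ℂ) * (↑(‖φ y‖ ^ 2):ℂ) * (↑(Real.log t):ℂ)
        - Complex.I * (↑(lam2/(1-σ)):ℂ) * (↑(‖φ y‖ ^ (2*σ)):ℂ) * (↑(t ^ (1-σ)):ℂ)) * φ y := rfl
  rw [hwtp]
  exact ((hc.sub hb).cexp).mul (hφ x).hasDerivAt

set_option maxHeartbeats 1000000 in
/-- `‖∂ₓ w_p(t,·) − ∂ₓ w̃_p(t,·)‖_{L²} ≤ C t^{1−σ} log t` for `t ≥ 2`. -/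
theorem deriv_wp_sub_wtp_L2_bound (lam1 lam2 σ : ℝ) (hσ : 1 < σ) (φ : ℝ → ℂ)
    (hφ : ContDiff ℝ 1 φ) (hinf : MemLp φ ⊤ volume)
    (hd2 : MemLp (deriv φ) 2 volume) :
    ∃ C > 0, ∀ t : ℝ, 2 ≤ t →
      eLpNorm (fun x => deriv (wp lam1 φ t) x - deriv (wtp lam1 lam2 σ φ t) x) 2 volume
        ≤ ENNReal.ofReal (C * t ^ (1-σ) * Real.log t) := by
  have hφd : Differentiable ℝ φ := hφ.differentiable one_ne_zero
  set M : ℝ := (eLpNorm φ ⊤ volume).toReal with hMdef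
  have hM0 : 0 ≤ M := ENNReal.toReal_nonneg
  have hMae : ∀ᵐ x ∂(volume : Measure ℝ), ‖φ x‖ ≤ M := by
    filter_upwards [ae_le_eLpNormEssSup (f := φ) (μ := volume)] with x hx
    have hfin : eLpNormEssSup φ volume ≠ ⊤ := by
      rw [← eLpNorm_exponent_top]; exact hinf.2.ne
    calc ‖φ x‖ = ((‖φ x‖₊ : ℝ≥0∞)).toReal := by simp
      _ ≤ (eLpNormEssSup φ volume).toReal := ENNReal.toReal_mono hfin hx
      _ = M := by rw [hMdef, eLpNorm_exponent_top]
  set B : ℝ := (eLpNorm (deriv φ) 2 volume).toReal with hBdef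
  have hB0 : 0 ≤ B := ENNReal.toReal_nonneg
  have hlog2 : (0:ℝ) < Real.log 2 := Real.log_pos one_lt_two
  set μ2 : ℝ := |lam2/(1-σ)| with hμ2def
  have hμ20 : 0 ≤ μ2 := abs_nonneg _
  set a : ℝ := 2* |lam1| *μ2*(M^2)^σ*M^2 with hadef
  set b : ℝ := μ2*(M^2)^σ + 2*σ*μ2*(M^2)^(σ-1)*M^2 with hbdef
  have ha0 : 0 ≤ a := by
    rw [hadef]; positivity
  have hb0 : 0 ≤ b := by
    have hσ0 : (0:ℝ) ≤ σ := by linarith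
    rw [hbdef]; positivity
  set K : ℝ := a + b / Real.log 2 with hKdef
  have hK0 : 0 ≤ K := by rw [hKdef]; positivity
  refine ⟨K*B + 1, by positivity, ?_⟩
  intro t ht
  have ht0 : (0:ℝ) < t := lt_of_lt_of_le two_pos ht
  have hlogt : Real.log 2 ≤ Real.log t := Real.log_le_log (by norm_num) ht
  have hlogt0 : 0 < Real.log t := lt_of_lt_of_le hlog2 hlogt
  set T : ℝ := t ^ (1-σ) with hTdef
  have hT0 : 0 ≤ T := Real.rpow_nonneg ht0.le _
  have key : ∀ᵐ x ∂(volume : Measure ℝ),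
      ‖deriv (wp lam1 φ t) x - deriv (wtp lam1 lam2 σ φ t) x‖
        ≤ ‖((K * T * Real.log t : ℝ) : ℂ) * deriv φ x‖ := by
    filter_upwards [hMae] with x hx
    set P : ℝ := ‖deriv φ x‖ with hPdef
    have hP0 : 0 ≤ P := norm_nonneg _
    have habs : ‖φ x‖ ≤ M := by exact hx
    have habs0 : 0 ≤ ‖φ x‖ := norm_nonneg _
    set r : ℝ := ‖φ x‖ ^ 2 with hrdef
    have hr0 : 0 ≤ r := by positivity
    have hrM : r ≤ M^2 := by rw [hrdef]; exact pow_le_pow_left₀ habs0 habs 2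
    set s : ℝ := ‖φ x‖ ^ (2*σ) with hsdef
    have hs0 : 0 ≤ s := Real.rpow_nonneg habs0 _
    have hsM : s ≤ (M^2)^σ := by
      rw [hsdef]
      calc ‖φ x‖ ^ (2*σ) ≤ M ^ (2*σ) :=
            Real.rpow_le_rpow habs0 habs (by linarith)
        _ = (M^2)^σ := by
            rw [← Real.rpow_natCast M 2, ← Real.rpow_mul hM0]; norm_num
    set ds : ℝ := σ * r^(σ-1) * drv φ x with hdsdef
    have hdrv : |drv φ x| ≤ 2*M*P := by
      calc |drv φ x| ≤ 2*‖φ x‖*‖deriv φ x‖ := aux_drv_le φ x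
        _ ≤ 2*M*P := by rw [hPdef]; nlinarith [norm_nonneg (deriv φ x)]
    have hds : |ds| ≤ σ*(M^2)^(σ-1)*(2*M*P) := by
      rw [hdsdef, abs_mul, abs_mul, _root_.abs_of_nonneg (by linarith : (0:ℝ) ≤ σ),
        _root_.abs_of_nonneg (Real.rpow_nonneg hr0 _)]
      have h1 : r^(σ-1) ≤ (M^2)^(σ-1) := Real.rpow_le_rpow hr0 hrM (by linarith)
      have h2 : (0:ℝ) ≤ r^(σ-1) := Real.rpow_nonneg hr0 _
      have hσ0 : (0:ℝ) < σ := by linarith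
      exact mul_le_mul (mul_le_mul_of_nonneg_left h1 hσ0.le) hdrv (abs_nonneg _)
        (mul_nonneg hσ0.le (Real.rpow_nonneg (by positivity) _))
    -- derivative formulas
    set cE : ℂ := -(Complex.I) * (↑lam1:ℂ) * (↑r:ℂ) * (↑(Real.log t):ℂ) with hcEdef
    set cd : ℂ := -(Complex.I) * (↑lam1:ℂ) * (↑(drv φ x):ℂ) * (↑(Real.log t):ℂ) with hcddef
    set bE : ℂ := Complex.I * (↑(lam2/(1-σ)):ℂ) * (↑s:ℂ) * (↑T:ℂ) with hbEdef
    set bd : ℂ := Complex.I * (↑(lam2/(1-σ)):ℂ) * (↑ds:ℂ) * (↑T:ℂ) with hbddef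
    have h1 : deriv (wp lam1 φ t) x = Complex.exp cE * cd * φ x + Complex.exp cE * deriv φ x :=
      (aux_hasDerivAt_wp lam1 φ hφd t x).deriv
    have h2 : deriv (wtp lam1 lam2 σ φ t) x
        = Complex.exp (cE - bE) * (cd - bd) * φ x + Complex.exp (cE - bE) * deriv φ x :=
      (aux_hasDerivAt_wtp lam1 lam2 σ hσ.le φ hφd t x).deriv
    have hD : deriv (wp lam1 φ t) x - deriv (wtp lam1 lam2 σ φ t) x
        = Complex.exp cE * ((1 - Complex.exp (-bE)) * (cd * φ x + deriv φ x)
            + Complex.exp (-bE) * bd * φ x) := by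
      rw [h1, h2, show cE - bE = cE + (-bE) by ring, Complex.exp_add]; ring
    have hexpc : ‖Complex.exp cE‖ = 1 := by
      have : cE = ((-(lam1 * r * Real.log t) : ℝ) : ℂ) * Complex.I := by
        rw [hcEdef]; push_cast; ring
      rw [this, Complex.norm_exp_ofReal_mul_I]
    have hexpb : ‖Complex.exp (-bE)‖ = 1 := by
      have : -bE = ((-(lam2/(1-σ) * s * T) : ℝ) : ℂ) * Complex.I := by
        rw [hbEdef]; push_cast; ring
      rw [this, Complex.norm_exp_ofReal_mul_I]
    have h1mb : ‖1 - Complex.exp (-bE)‖ ≤ μ2 * ((M^2)^σ) * T := by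
      have heq : -bE = ((-(lam2/(1-σ) * s * T) : ℝ) : ℂ) * Complex.I := by
        rw [hbEdef]; push_cast; ring
      calc ‖1 - Complex.exp (-bE)‖ = ‖Complex.exp (-bE) - 1‖ := norm_sub_rev _ _
        _ ≤ |(-(lam2/(1-σ) * s * T) : ℝ)| := by rw [heq]; exact aux_exp_I_sub_one_le _
        _ = μ2 * s * T := by
            rw [abs_neg, abs_mul, abs_mul, hμ2def, _root_.abs_of_nonneg hs0, _root_.abs_of_nonneg hT0]
        _ ≤ μ2 * ((M^2)^σ) * T :=
            mul_le_mul_of_nonneg_right (mul_le_mul_of_nonneg_left hsM hμ20) hT0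
    have hcd : ‖cd‖ = |lam1| * |drv φ x| * Real.log t := by
      rw [hcddef]
      simp only [norm_mul, norm_neg, Complex.norm_I,
        Complex.norm_real, Real.norm_eq_abs, one_mul]
      rw [_root_.abs_of_nonneg hlogt0.le]
    have hbd : ‖bd‖ = μ2 * |ds| * T := by
      rw [hbddef]
      simp only [norm_mul, Complex.norm_I, Complex.norm_real, Real.norm_eq_abs, one_mul]
      rw [hμ2def, _root_.abs_of_nonneg hT0]
    have step1 : ‖deriv (wp lam1 φ t) x - deriv (wtp lam1 lam2 σ φ t) x‖
        ≤ ‖1 - Complex.exp (-bE)‖ * (‖cd‖ * ‖φ x‖ + P) + ‖bd‖ * ‖φ x‖ := by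
      rw [hD, norm_mul, hexpc, one_mul]
      calc ‖(1 - Complex.exp (-bE)) * (cd * φ x + deriv φ x)
            + Complex.exp (-bE) * bd * φ x‖
          ≤ ‖(1 - Complex.exp (-bE)) * (cd * φ x + deriv φ x)‖
            + ‖Complex.exp (-bE) * bd * φ x‖ := norm_add_le _ _
        _ ≤ ‖1 - Complex.exp (-bE)‖ * (‖cd‖ * ‖φ x‖ + P) + ‖bd‖ * ‖φ x‖ := by
            rw [norm_mul, norm_mul, norm_mul, hexpb, one_mul, hPdef]
            gcongr
            exact (norm_add_le _ _).trans (by rw [norm_mul])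
    have step2 : ‖deriv (wp lam1 φ t) x - deriv (wtp lam1 lam2 σ φ t) x‖
        ≤ (μ2 * ((M^2)^σ) * T) * ((|lam1| * (2*M*P) * Real.log t) * M + P)
          + (μ2 * (σ*(M^2)^(σ-1)*(2*M*P)) * T) * M := by
      refine step1.trans ?_
      rw [hcd, hbd]
      have hσ0 : (0:ℝ) < σ := by linarith
      have hrp : (0:ℝ) ≤ (M^2)^(σ-1) := Real.rpow_nonneg (by positivity) _
      have t1 : |lam1| * |drv φ x| * Real.log t * ‖φ x‖ + P
          ≤ (|lam1| * (2*M*P) * Real.log t) * M + P := by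
        have h6 : |lam1| * |drv φ x| * Real.log t ≤ |lam1| * (2*M*P) * Real.log t :=
          mul_le_mul_of_nonneg_right (mul_le_mul_of_nonneg_left hdrv (abs_nonneg _)) hlogt0.le
        have h7 := mul_le_mul h6 hx (norm_nonneg _) (by positivity)
        linarith
      have t2 : ‖1 - Complex.exp (-bE)‖ * (|lam1| * |drv φ x| * Real.log t * ‖φ x‖ + P)
          ≤ (μ2 * ((M^2)^σ) * T) * ((|lam1| * (2*M*P) * Real.log t) * M + P) := by
        refine mul_le_mul h1mb t1 ?_ (by positivity)
        have : (0:ℝ) ≤ |lam1| * |drv φ x| * Real.log t * ‖φ x‖ := by positivity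
        linarith
      have t3 : μ2 * |ds| * T * ‖φ x‖ ≤ (μ2 * (σ*(M^2)^(σ-1)*(2*M*P)) * T) * M := by
        refine mul_le_mul ?_ hx (norm_nonneg _) ?_
        · exact mul_le_mul_of_nonneg_right (mul_le_mul_of_nonneg_left hds hμ20) hT0
        · exact mul_nonneg (mul_nonneg hμ20 (mul_nonneg (mul_nonneg hσ0.le hrp)
            (by positivity))) hT0
      exact add_le_add t2 t3
    have step3 : (μ2 * ((M^2)^σ) * T) * ((|lam1| * (2*M*P) * Real.log t) * M + P)
          + (μ2 * (σ*(M^2)^(σ-1)*(2*M*P)) * T) * M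
        = T * P * (a * Real.log t + b) := by
      rw [hadef, hbdef]; ring
    have step4 : T * P * (a * Real.log t + b) ≤ (K * T * Real.log t) * P := by
      have hb' : b ≤ (b / Real.log 2) * Real.log t := by
        have := mul_le_mul_of_nonneg_left hlogt (div_nonneg hb0 hlog2.le)
        rwa [div_mul_cancel₀ b hlog2.ne'] at this
      have h5 : a * Real.log t + b ≤ K * Real.log t := by
        rw [hKdef]; nlinarith
      calc T * P * (a * Real.log t + b) ≤ T * P * (K * Real.log t) := by
            apply mul_le_mul_of_nonneg_left h5 (by positivity)
        _ = (K * T * Real.log t) * P := by ring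
    have hnorm : ‖((K * T * Real.log t : ℝ) : ℂ) * deriv φ x‖ = (K * T * Real.log t) * P := by
      rw [norm_mul, Complex.norm_real, Real.norm_eq_abs, _root_.abs_of_nonneg (by positivity), hPdef]
    rw [hnorm]
    exact step2.trans (le_of_le_of_eq (le_of_eq step3) rfl |>.trans step4)
  calc eLpNorm (fun x => deriv (wp lam1 φ t) x - deriv (wtp lam1 lam2 σ φ t) x) 2 volume
      ≤ eLpNorm (fun x => ((K * T * Real.log t : ℝ) : ℂ) * deriv φ x) 2 volume :=
        eLpNorm_mono_ae key
    _ = ‖((K * T * Real.log t : ℝ) : ℂ)‖₊ * eLpNorm (deriv φ) 2 volume := by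
        rw [show (fun x => ((K * T * Real.log t : ℝ) : ℂ) * deriv φ x)
            = ((K * T * Real.log t : ℝ) : ℂ) • (deriv φ) from rfl]
        exact eLpNorm_const_smul _ _ _ _
    _ ≤ ENNReal.ofReal (K * T * Real.log t) * ENNReal.ofReal B := by
        gcongr
        · rw [← enorm_eq_nnnorm, ← ofReal_norm, Complex.norm_real, Real.norm_eq_abs,
            _root_.abs_of_nonneg (by positivity)]
        · rw [hBdef, ENNReal.ofReal_toReal hd2.2.ne]
    _ = ENNReal.ofReal ((K * T * Real.log t) * B) :=
        (ENNReal.ofReal_mul (by positivity)).symm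
    _ ≤ ENNReal.ofReal ((K*B + 1) * T * Real.log t) := by
        apply ENNReal.ofReal_le_ofReal; nlinarith
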